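/- Let C be a d-uniform clutter with incidence matrix A. If the set covering polyhedron Q(A) = {x ∈ ℝ^n : x ≥ 0, xA ≥ 1} is integral, then there exists a minimal vertex cover of C intersecting every edge of C in exactly one vertex. -/

import Mathlib

open Finset

/-- A clutter on vertex set `Fin n`: a family of nonempty edges, none contained in another. -/
structure Clutter (n : ℕ) where
  edges : Finset (Finset (Fin n))
  nonempty_edges : ∀ e ∈ edges, e.Nonempty
  antichain : ∀ e ∈ edges, ∀ f ∈ edges, e ⊆ f → e = f

namespace Clutter

variable {n : ℕ}

/-- `C` is `d`-uniform: every edge has exactly `d` vertices. -/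
def Uniform (C : Clutter n) (d : ℕ) : Prop := ∀ e ∈ C.edges, e.card = d

/-- `S` is a vertex cover of `C`. -/
def IsCover (C : Clutter n) (S : Finset (Fin n)) : Prop := ∀ e ∈ C.edges, (e ∩ S).Nonempty

/-- `S` is a minimal vertex cover of `C`. -/
def IsMinCover (C : Clutter n) (S : Finset (Fin n)) : Prop :=
  C.IsCover S ∧ ∀ T ⊆ S, C.IsCover T → T = S

/-- The vertex covering number `α₀(C)`. -/
noncomputable def coverNumber (C : Clutter n) : ℕ :=
  sInf {k | ∃ S : Finset (Fin n), C.IsCover S ∧ S.card = k}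

/-- The edge independence (matching) number `β₁(C)`. -/
noncomputable def matchNumber (C : Clutter n) : ℕ :=
  sSup {k | ∃ M : Finset (Finset (Fin n)), M ⊆ C.edges ∧
    (∀ e ∈ M, ∀ f ∈ M, e ≠ f → Disjoint e f) ∧ M.card = k}

/-- `C` has a perfect matching: pairwise disjoint edges covering all vertices. -/
def HasPerfectMatching (C : Clutter n) : Prop :=
  ∃ M : Finset (Finset (Fin n)), M ⊆ C.edges ∧
    (∀ e ∈ M, ∀ f ∈ M, e ≠ f → Disjoint e f) ∧ (∀ i : Fin n, ∃ e ∈ M, i ∈ e)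

/-- The set covering polyhedron `Q(A) = {x : x ≥ 0, xA ≥ 1}`. -/
def QA (C : Clutter n) : Set (Fin n → ℝ) :=
  {x | (∀ i, 0 ≤ x i) ∧ ∀ e ∈ C.edges, 1 ≤ ∑ i ∈ e, x i}

/-- `Q(A)` is an integral polyhedron: all its vertices (extreme points) are integral. -/
def QAIntegral (C : Clutter n) : Prop :=
  ∀ x ∈ Set.extremePoints ℝ C.QA, ∀ i, ∃ z : ℤ, x i = (z : ℝ)

/-- Deletion of a vertex: remove `v` and all edges through it. -/
def delete (C : Clutter n) (v : Fin n) : Clutter n where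
  edges := C.edges.filter (fun e => v ∉ e)
  nonempty_edges := fun e he => C.nonempty_edges e (mem_filter.mp he).1
  antichain := fun e he f hf hef =>
    C.antichain e (mem_filter.mp he).1 f (mem_filter.mp hf).1 hef

/-- The edges of the minor of `C` obtained by deleting the vertices in `D`
(setting them to `0`) and contracting the vertices in `U` (setting them to `1`):
the minimal nonempty sets of the form `e \ U` with `e` an edge disjoint from `D`. -/
def minorEdges (C : Clutter n) (D U : Finset (Fin n)) : Finset (Finset (Fin n)) :=
  ((C.edges.filter (fun e => Disjoint e D)).image (fun e => e \ U)).filter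
    (fun e => e.Nonempty ∧
      ∀ f ∈ (C.edges.filter (fun e => Disjoint e D)).image (fun e => e \ U),
        f.Nonempty → f ⊆ e → f = e)

/-- The minor of `C` determined by deleting `D` and contracting `U`. -/
def minor (C : Clutter n) (D U : Finset (Fin n)) : Clutter n where
  edges := C.minorEdges D U
  nonempty_edges := fun e he => ((mem_filter.mp he).2).1
  antichain := fun e he f hf hef =>
    ((mem_filter.mp hf).2).2 e (mem_filter.mp he).1 ((mem_filter.mp he).2).1 hef

/-- The König property: `α₀(C) = β₁(C)`. -/
def HasKonig (C : Clutter n) : Prop := C.coverNumber = C.matchNumber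

/-- The packing property: every (proper) minor of `C` has the König property. -/
def PackingProperty (C : Clutter n) : Prop :=
  ∀ D U : Finset (Fin n), Disjoint D U →
    (∀ e ∈ C.edges, Disjoint e D → ¬ e ⊆ U) → (C.minor D U).HasKonig

/-- The max-flow min-cut property: for every nonnegative integral `α` the LP
`min{⟨α,x⟩ : x ≥ 0, xA ≥ 1}` and its dual `max{⟨y,1⟩ : y ≥ 0, Ay ≤ α}` both have
integral optimum solutions (expressed via a pair of integral feasible solutions
with equal objective values, which are then optimal by LP duality). -/
def HasMFMC (C : Clutter n) : Prop :=
  ∀ α : Fin n → ℕ,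
    ∃ (x : Fin n → ℕ) (y : Finset (Fin n) → ℕ),
      (∀ e ∈ C.edges, 1 ≤ ∑ i ∈ e, x i) ∧
      (∀ e, e ∉ C.edges → y e = 0) ∧
      (∀ i : Fin n, ∑ e ∈ C.edges.filter (fun e => i ∈ e), y e ≤ α i) ∧
      (∑ i, α i * x i = ∑ e ∈ C.edges, y e)

/-- The incidence matrix of `C`, with columns indexed by the edges. -/
def inc (C : Clutter n) : Matrix (Fin n) {e // e ∈ C.edges} ℤ :=
  Matrix.of fun i e => if i ∈ e.1 then 1 else 0

end Clutter

/-- `Δ_r(A) = 1`: the gcd of all nonzero `r × r` subdeterminants of `A` is `1`,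
i.e. every common divisor of them is a unit. -/
def DeltaOne {m m' : Type*} [Fintype m] [Fintype m'] (A : Matrix m m' ℤ) (r : ℕ) : Prop :=
  ∀ k : ℤ, (∀ (f : Fin r → m) (g : Fin r → m'), Function.Injective f → Function.Injective g →
    (A.submatrix f g).det ≠ 0 → k ∣ (A.submatrix f g).det) → IsUnit k


/-- If `C` is a `d`-uniform clutter whose set covering polyhedron `Q(A)`
is integral, then there exists a minimal vertex cover of `C` intersecting every edge of
`C` in exactly one vertex. -/
theorem stmt0 {n d : ℕ} (C : Clutter n) (hC : C.Uniform d) (hQ : C.QAIntegral) :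
    ∃ S : Finset (Fin n), C.IsMinCover S ∧ ∀ e ∈ C.edges, (e ∩ S).card = 1 := by
  classical
  -- The face of QA where all edge constraints are tight and uncovered coordinates vanish.
  set F : Set (Fin n → ℝ) := {x | (∀ i, 0 ≤ x i) ∧ (∀ e ∈ C.edges, ∑ i ∈ e, x i = 1) ∧
      (∀ i : Fin n, (∀ e ∈ C.edges, i ∉ e) → x i = 0)} with hFdef
  have hFQ : F ⊆ C.QA := fun x hx => ⟨hx.1, fun e he => (hx.2.1 e he).ge⟩
  -- F is an extreme subset of QA
  have hext : IsExtreme ℝ C.QA F := by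
    refine ⟨hFQ, ?_⟩
    rintro x₁ hx₁ x₂ hx₂ x hxF ⟨a, b, ha, hb, hab, hx⟩
    have hs : ∀ e ∈ C.edges, (∑ i ∈ e, x₁ i = 1) ∧ (∑ i ∈ e, x₂ i = 1) := by
      intro e he
      have h1 : (1:ℝ) ≤ ∑ i ∈ e, x₁ i := hx₁.2 e he
      have h2 : (1:ℝ) ≤ ∑ i ∈ e, x₂ i := hx₂.2 e he
      have h3 : a * (∑ i ∈ e, x₁ i) + b * (∑ i ∈ e, x₂ i) = 1 := by
        have h4 := hxF.2.1 e he
        rw [← hx] at h4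
        rw [Finset.mul_sum, Finset.mul_sum, ← Finset.sum_add_distrib, ← h4]
        exact Finset.sum_congr rfl fun i _ => by simp
      constructor <;> nlinarith
    have hz : ∀ i : Fin n, (∀ e ∈ C.edges, i ∉ e) → x₁ i = 0 ∧ x₂ i = 0 := by
      intro i hi
      have h1 : 0 ≤ x₁ i := hx₁.1 i
      have h2 : 0 ≤ x₂ i := hx₂.1 i
      have h3 : a * x₁ i + b * x₂ i = 0 := by
        have h5 := congrFun hx i
        simpa using h5.trans (hxF.2.2 i hi)
      constructor <;> nlinarith
    exact ⟨hx₁.1, fun e he => (hs e he).1, fun i hi => (hz i hi).1⟩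
  -- F is closed
  have hsum_cont : ∀ e : Finset (Fin n), Continuous fun x : Fin n → ℝ => ∑ i ∈ e, x i :=
    fun e => continuous_finset_sum _ fun i _ => continuous_apply i
  have hFclosed : IsClosed F := by
    have h1 : IsClosed {x : Fin n → ℝ | ∀ i, 0 ≤ x i} := by
      rw [Set.setOf_forall]
      exact isClosed_iInter fun i => isClosed_le continuous_const (continuous_apply i)
    have h2 : IsClosed {x : Fin n → ℝ | ∀ e ∈ C.edges, ∑ i ∈ e, x i = 1} := by
      rw [Set.setOf_forall]
      refine isClosed_iInter fun e => ?_
      by_cases he : e ∈ C.edges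
      · simp only [he, forall_true_left]
        exact isClosed_eq (hsum_cont e) continuous_const
      · simp [he]
    have h3 : IsClosed {x : Fin n → ℝ | ∀ i : Fin n, (∀ e ∈ C.edges, i ∉ e) → x i = 0} := by
      rw [Set.setOf_forall]
      refine isClosed_iInter fun i => ?_
      by_cases hi : ∀ e ∈ C.edges, i ∉ e
      · have hset : {x : Fin n → ℝ | (∀ e ∈ C.edges, i ∉ e) → x i = 0} = {x | x i = 0} := by
          ext x
          exact ⟨fun h => h hi, fun h _ => h⟩
        rw [hset]
        exact isClosed_eq (continuous_apply i) continuous_const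
      · have huniv : {x : Fin n → ℝ | (∀ e ∈ C.edges, i ∉ e) → x i = 0} = Set.univ := by
          ext x
          simp only [Set.mem_setOf_eq, Set.mem_univ, iff_true]
          exact fun h => absurd h hi
        rw [huniv]
        exact isClosed_univ
    exact (h1.inter (h2.inter h3) : _)
  -- coordinates in F lie in [0,1]
  have hbnd : ∀ x ∈ F, ∀ i, x i ≤ 1 := by
    intro x hx i
    by_cases hi : ∀ e ∈ C.edges, i ∉ e
    · rw [hx.2.2 i hi]; norm_num
    · push_neg at hi
      obtain ⟨e, he, hie⟩ := hi
      calc x i ≤ ∑ j ∈ e, x j := Finset.single_le_sum (fun j _ => hx.1 j) hie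
        _ = 1 := hx.2.1 e he
  -- F is compact
  have hFcomp : IsCompact F := by
    refine IsCompact.of_isClosed_subset
        (isCompact_univ_pi fun _ : Fin n => (isCompact_Icc : IsCompact (Set.Icc (0:ℝ) 1)))
        hFclosed ?_
    intro x hx
    rw [Set.mem_univ_pi]
    exact fun i => ⟨hx.1 i, hbnd x hx i⟩
  -- F is nonempty
  have hFne : F.Nonempty := by
    refine ⟨fun i => if ∃ e ∈ C.edges, i ∈ e then (d : ℝ)⁻¹ else 0, ?_, ?_, ?_⟩
    · intro i
      dsimp only
      split <;> positivity
    · intro e he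
      have hd : e.card = d := hC e he
      have hd0 : 0 < d := hd ▸ Finset.card_pos.mpr (C.nonempty_edges e he)
      have hcongr : ∀ i ∈ e,
          (fun i => if ∃ f ∈ C.edges, i ∈ f then (d : ℝ)⁻¹ else 0) i = (d : ℝ)⁻¹ := by
        intro i hi
        dsimp only
        rw [if_pos ⟨e, he, hi⟩]
      rw [Finset.sum_congr rfl hcongr, Finset.sum_const, hd, nsmul_eq_mul]
      field_simp
    · intro i hi
      dsimp only
      rw [if_neg]
      push_neg
      exact hi
  -- Get an extreme point of QA lying in F
  obtain ⟨x, hxF⟩ := hFcomp.extremePoints_nonempty hFne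
  have hxQA : x ∈ Set.extremePoints ℝ C.QA := hext.extremePoints_subset_extremePoints hxF
  have hxmemF : x ∈ F := hxF.1
  -- x is 0/1 valued, and 0 on uncovered vertices
  have h01 : ∀ i : Fin n, x i = 0 ∨ x i = 1 := by
    intro i
    obtain ⟨z, hz⟩ := hQ x hxQA i
    have h0 : (0:ℝ) ≤ z := hz ▸ hxmemF.1 i
    have h1 : (z:ℝ) ≤ 1 := hz ▸ hbnd x hxmemF i
    have h0' : (0:ℤ) ≤ z := by exact_mod_cast h0
    have h1' : z ≤ 1 := by exact_mod_cast h1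
    interval_cases z
    · left; simpa using hz
    · right; simpa using hz
  set S : Finset (Fin n) := Finset.univ.filter (fun i => x i = 1) with hSdef
  have hcard : ∀ e ∈ C.edges, (e ∩ S).card = 1 := by
    intro e he
    have hinter : e ∩ S = e.filter (fun i => x i = 1) := by
      ext i; simp [hSdef, Finset.mem_filter, Finset.mem_inter]
    have hsum : ∑ i ∈ e, x i = ((e.filter (fun i => x i = 1)).card : ℝ) := by
      rw [← Finset.sum_filter_add_sum_filter_not e (fun i => x i = 1)]
      have hA : ∑ i ∈ e.filter (fun i => x i = 1), x i
          = ((e.filter (fun i => x i = 1)).card : ℝ) := by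
        rw [Finset.sum_congr rfl (fun i hi => (Finset.mem_filter.mp hi).2),
          Finset.sum_const, nsmul_eq_mul, mul_one]
      have hB : ∑ i ∈ e.filter (fun i => ¬ x i = 1), x i = 0 := by
        refine Finset.sum_eq_zero fun i hi => ?_
        rcases h01 i with h | h
        · exact h
        · exact absurd h (Finset.mem_filter.mp hi).2
      rw [hA, hB, add_zero]
    have : ((e.filter (fun i => x i = 1)).card : ℝ) = 1 := by
      rw [← hsum]; exact hxmemF.2.1 e he
    rw [hinter]
    exact_mod_cast this
  have hScov : C.IsCover S := by
    intro e he
    rw [← Finset.card_pos, hcard e he]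
    norm_num
  refine ⟨S, ⟨hScov, ?_⟩, hcard⟩
  intro T hTS hT
  refine Finset.Subset.antisymm hTS (fun v hv => ?_)
  have hxv : x v = 1 := (Finset.mem_filter.mp hv).2
  have hcov : ∃ e ∈ C.edges, v ∈ e := by
    by_contra hc
    push_neg at hc
    have := hxmemF.2.2 v hc
    rw [hxv] at this
    norm_num at this
  obtain ⟨e, he, hve⟩ := hcov
  have hsingle : e ∩ S = {v} := by
    have hvS : v ∈ e ∩ S := Finset.mem_inter.mpr ⟨hve, hv⟩
    exact Finset.eq_singleton_iff_unique_mem.mpr ⟨hvS, fun w hw => by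
      have := Finset.card_eq_one.mp (hcard e he)
      obtain ⟨u, hu⟩ := this
      rw [hu] at hw hvS
      rw [Finset.mem_singleton] at hw hvS
      rw [hw, hvS]⟩ |>.symm ▸ rfl
  have := hT e he
  obtain ⟨w, hw⟩ := this
  have hwS : w ∈ e ∩ S := Finset.mem_inter.mpr ⟨(Finset.mem_inter.mp hw).1,
    hTS (Finset.mem_inter.mp hw).2⟩
  rw [hsingle, Finset.mem_singleton] at hwS
  rw [← hwS]
  exact (Finset.mem_inter.mp hw).2
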